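/- Fix d ≥ 2, p ∈ (0,1] and λ ∈ [0,1]. For every nearest-neighbor edge e of Z^d, the marginal probability that e is open in the independent alignment percolation model equals λ: ℙ_{p,λ,d}(σ(e) = 1) = λ. -/

import Mathlib

open MeasureTheory ENNReal

namespace AlignmentPercolation

/-- Sites of the lattice `ℤ^d`. -/
abbrev Site (d : ℕ) := Fin d → ℤ

/-- A site configuration: `true` means occupied. -/
abbrev SiteCfg (d : ℕ) := Site d → Bool

/-- Labels (open/closed) attached to (potential) segments, indexed by their ordered
pair of endpoints. -/
abbrev PairLabels (d : ℕ) := Site d × Site d → Bool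

/-- A configuration of the independent alignment percolation model: a site
configuration together with independent labels for the segments. -/
abbrev Cfg (d : ℕ) := SiteCfg d × PairLabels d

/-- Nearest-neighbour edges of `ℤ^d`, indexed by their lower endpoint and direction:
`(u, i)` is the edge from `u` to `u + e_i`. -/
abbrev EdgeIdx (d : ℕ) := Site d × Fin d

/-- The point obtained from `u` by replacing its `i`-th coordinate with `a`. -/
def seg {d : ℕ} (u : Site d) (i : Fin d) (a : ℤ) : Site d := Function.update u i a

/-- The point `u + e_i`. -/
def up {d : ℕ} (u : Site d) (i : Fin d) : Site d := seg u i (u i + 1)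

/-- The skewed doubling map underlying the construction of an i.i.d.
Bernoulli(p) sequence from a single uniform random variable on `[0,1)`. -/
noncomputable def bernShift (p : ℝ) (x : ℝ) : ℝ :=
  if x < p then x / p else (x - p) / (1 - p)

open scoped Classical in
noncomputable def bernDigit (p : ℝ) (x : ℝ) : Bool := if x < p then true else false

/-- The sequence of skewed binary digits of `x`; under the uniform distribution on
`[0,1)` this is an i.i.d. Bernoulli(p) sequence. -/
noncomputable def bernDigits (p : ℝ) (x : ℝ) : ℕ → Bool :=
  fun n => bernDigit p ((bernShift p)^[n] x)

/-- The i.i.d. Bernoulli(p) product probability measure on `ι → Bool`, for a countable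
index type `ι`: the law of the family of skewed binary digits (indexed through an
injection `ι ↪ ℕ`) of a uniform random variable on `[0,1)`. Each coordinate is `true`
with probability `p` (with the convention that `p` is clamped to `[0,1]`). -/
noncomputable def iidBool (ι : Type*) [Countable ι] (p : ℝ) : Measure (ι → Bool) :=
  Measure.map (fun f (i : ι) => f ((Countable.exists_injective_nat ι).choose i))
    (Measure.map (bernDigits p) (volume.restrict (Set.Ico (0 : ℝ) 1)))

/-- The law `ℙ_{p,λ,d}` of the independent alignment percolation model: sites are
occupied independently with probability `p`, and independently every potential
segment carries an independent Bernoulli(λ) label. -/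
noncomputable def alignMeasure (d : ℕ) (p lam : ℝ) : Measure (Cfg d) :=
  (iidBool (Site d) p).prod (iidBool (Site d × Site d) lam)

/-- `(v, w)` is a feasible pair of the site configuration `ω` (ordered so that the
coordinate where they differ increases): `v` and `w` differ in exactly one
coordinate, are both occupied, and no site strictly between them is occupied. -/
def FeasiblePair {d : ℕ} (ω : SiteCfg d) (v w : Site d) : Prop :=
  ∃ i : Fin d, (∀ j, j ≠ i → v j = w j) ∧ v i < w i ∧
    ω v = true ∧ ω w = true ∧ ∀ c : ℤ, v i < c → c < w i → ω (seg v i c) = false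

/-- The edge `e` lies on the axis-parallel segment with endpoints `v` and `w`. -/
def EdgeOnSeg {d : ℕ} (e : EdgeIdx d) (v w : Site d) : Prop :=
  ∃ a b : ℤ, a ≤ e.1 e.2 ∧ e.1 e.2 < b ∧ v = seg e.1 e.2 a ∧ w = seg e.1 e.2 b

/-- The edge `e` is open in the configuration `ξ`: it lies on the segment of a
feasible pair whose label is open. -/
def EdgeOpen {d : ℕ} (ξ : Cfg d) (e : EdgeIdx d) : Prop :=
  ∃ v w : Site d, FeasiblePair ξ.1 v w ∧ EdgeOnSeg e v w ∧ ξ.2 (v, w) = true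

/-- The induced edge configuration `σ ∈ {0,1}^{E^d}` (as a `Bool`). -/
noncomputable def edgeState {d : ℕ} (ξ : Cfg d) (e : EdgeIdx d) : Bool :=
  @decide (EdgeOpen ξ e) (Classical.propDecidable _)

/-- The graph on `ℤ^d` whose edges are the open edges of the configuration `ξ`. -/
def openGraph {d : ℕ} (ξ : Cfg d) : SimpleGraph (Site d) where
  Adj u v := ∃ i, (v = up u i ∧ EdgeOpen ξ (u, i)) ∨ (u = up v i ∧ EdgeOpen ξ (v, i))
  symm := by constructor; rintro u v ⟨i, h | h⟩; exacts [⟨i, Or.inr h⟩, ⟨i, Or.inl h⟩]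
  loopless := by
    constructor
    rintro u ⟨i, ⟨h, -⟩ | ⟨h, -⟩⟩ <;>
    · have := congrFun h i
      simp [up, seg] at this

/-- The site `v` lies in an infinite connected component of open edges. -/
def PercolatesFrom {d : ℕ} (ξ : Cfg d) (v : Site d) : Prop :=
  {w | (openGraph ξ).Reachable v w}.Infinite

/-- The set `𝒪` of open edges percolates. -/
def Percolates {d : ℕ} (ξ : Cfg d) : Prop := ∃ v, PercolatesFrom ξ v

/-- `θ(p,λ,d)`: the probability that the origin lies in an infinite open cluster. -/
noncomputable def theta (d : ℕ) (p lam : ℝ) : ℝ≥0∞ :=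
  alignMeasure d p lam {ξ | PercolatesFrom ξ 0}

/-- `ℙ_{p,λ,d}(𝒪 percolates)`. -/
noncomputable def percProb (d : ℕ) (p lam : ℝ) : ℝ≥0∞ :=
  alignMeasure d p lam {ξ | Percolates ξ}

/-- The critical segment parameter `λ_c(p,d) = sup {λ ≥ 0 : θ(p,λ,d) = 0}`. -/
noncomputable def lambdaC (d : ℕ) (p : ℝ) : ℝ :=
  sSup {lam : ℝ | 0 ≤ lam ∧ theta d p lam = 0}

/-- A configuration of Bernoulli bond percolation on `ℤ^d`. -/
abbrev BondCfg (d : ℕ) := EdgeIdx d → Bool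

/-- Independent Bernoulli(λ) bond percolation on `ℤ^d`. -/
noncomputable def bondMeasure (d : ℕ) (lam : ℝ) : Measure (BondCfg d) :=
  iidBool (EdgeIdx d) lam

/-- The graph of open bonds of a bond configuration. -/
def bondGraph {d : ℕ} (σ : BondCfg d) : SimpleGraph (Site d) where
  Adj u v := ∃ i, (v = up u i ∧ σ (u, i) = true) ∨ (u = up v i ∧ σ (v, i) = true)
  symm := by constructor; rintro u v ⟨i, h | h⟩; exacts [⟨i, Or.inr h⟩, ⟨i, Or.inl h⟩]
  loopless := by
    constructor
    rintro u ⟨i, ⟨h, -⟩ | ⟨h, -⟩⟩ <;>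
    · have := congrFun h i
      simp [up, seg] at this

/-- The percolation function of Bernoulli bond percolation on `ℤ^d`. -/
noncomputable def thetaBond (d : ℕ) (lam : ℝ) : ℝ≥0∞ :=
  bondMeasure d lam {σ | {w | (bondGraph σ).Reachable 0 w}.Infinite}

/-- The critical parameter `p_c^bond(d)` of Bernoulli bond percolation on `ℤ^d`. -/
noncomputable def pcBond (d : ℕ) : ℝ :=
  sSup {lam : ℝ | 0 ≤ lam ∧ thetaBond d lam = 0}

/-- The (closed) sup-norm box `B(x,L)` in `ℤ^d`. -/
def box (d : ℕ) (x : Site d) (L : ℝ) : Set (Site d) :=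
  {z | ∀ i, |((z i - x i : ℤ) : ℝ)| ≤ L}

/-- The sphere `∂B(x,L) = {z : ‖z - x‖_∞ = ⌊L⌋}` in `ℤ^d`. -/
def sphere (d : ℕ) (x : Site d) (L : ℝ) : Set (Site d) :=
  {z | (∀ i, |z i - x i| ≤ ⌊L⌋) ∧ ∃ i, |z i - x i| = ⌊L⌋}

/-- The sup-norm distance `‖x - y‖_∞` on `ℤ^d` (as a natural number). -/
def supDist {d : ℕ} (x y : Site d) : ℕ :=
  Finset.univ.sup fun i => (x i - y i).natAbs

/-- The sequence of scales: `L 0 = 10^4` and `L (k+1) = (L k)^(3/2)`. -/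
noncomputable def Lscale : ℕ → ℝ
  | 0 => 10 ^ 4
  | k + 1 => Lscale k ^ ((3 : ℝ) / 2)

/-- `α(p) = -log (1-p)`. -/
noncomputable def alphaP (p : ℝ) : ℝ := - Real.log (1 - p)

/-- The edge `e` has both endpoints in `B`. -/
def EdgeIn {d : ℕ} (B : Set (Site d)) (e : EdgeIdx d) : Prop :=
  e.1 ∈ B ∧ up e.1 e.2 ∈ B

/-- The event `A` is supported on the edges of `B`: it is measurable with respect to
the σ-algebra generated by the states of the edges with both endpoints in `B`. -/
def SupportedOnEdges {d : ℕ} (B : Set (Site d)) (A : Set (Cfg d)) : Prop :=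
  MeasurableSet[MeasurableSpace.comap
    (fun ξ (e : {e : EdgeIdx d // EdgeIn B e}) => edgeState ξ e.1) inferInstance] A

/-- `S` is a set of points of `T` whose `L`-boxes cover `T`. -/
def IsCover (d : ℕ) (T : Set (Site d)) (L : ℝ) (S : Finset (Site d)) : Prop :=
  ↑S ⊆ T ∧ T ⊆ ⋃ x ∈ S, box d x L

/-- `S` is a cover of `T` by `L`-boxes centred in `T`, of minimal cardinality. -/
def IsMinCover (d : ℕ) (T : Set (Site d)) (L : ℝ) (S : Finset (Site d)) : Prop :=
  IsCover d T L S ∧ ∀ S' : Finset (Site d), IsCover d T L S' → S.card ≤ S'.card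


/-! ### Auxiliary lemmas for `edge_marginal` -/

section IidAux

noncomputable def bw (p : ℝ) : Option Bool → ℝ≥0∞
  | some true => ENNReal.ofReal p
  | some false => ENNReal.ofReal (1 - p)
  | none => 1

lemma measurable_bernShift (p : ℝ) : Measurable (bernShift p) := by
  unfold bernShift
  exact Measurable.ite measurableSet_Iio (measurable_id.div_const p)
    ((measurable_id.sub_const p).div_const (1 - p))

lemma measurable_bernDigit (p : ℝ) : Measurable (bernDigit p) := by
  unfold bernDigit
  exact Measurable.ite measurableSet_Iio measurable_const measurable_const

lemma measurable_bernDigits (p : ℝ) : Measurable (bernDigits p) :=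
  measurable_pi_lambda _ fun n =>
    (measurable_bernDigit p).comp ((measurable_bernShift p).iterate n)

lemma bernDigit_eq_true (p x : ℝ) : bernDigit p x = true ↔ x < p := by
  unfold bernDigit; split <;> simp_all

lemma bernDigit_eq_false (p x : ℝ) : bernDigit p x = false ↔ ¬ x < p := by
  rw [← bernDigit_eq_true p x]; cases bernDigit p x <;> simp

lemma branchT {p : ℝ} (hp0 : 0 ≤ p) (hp1 : p ≤ 1) (A : Set ℝ) :
    (volume.restrict (Set.Ico (0 : ℝ) 1)) {x | x < p ∧ x / p ∈ A} =
      ENNReal.ofReal p * (volume.restrict (Set.Ico (0 : ℝ) 1)) A := by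
  rw [Measure.restrict_apply' measurableSet_Ico, Measure.restrict_apply' measurableSet_Ico]
  rcases eq_or_lt_of_le hp0 with h | h
  · have : {x : ℝ | x < p ∧ x / p ∈ A} ∩ Set.Ico 0 1 = ∅ := by
      ext x; simp only [Set.mem_inter_iff, Set.mem_setOf_eq, Set.mem_Ico, Set.mem_empty_iff_false,
        iff_false]
      rintro ⟨⟨hx, -⟩, hx0, -⟩; rw [← h] at hx; linarith
    rw [this, ← h]; simp
  · have hset : {x : ℝ | x < p ∧ x / p ∈ A} ∩ Set.Ico 0 1 =
        (fun x => x * p⁻¹) ⁻¹' (A ∩ Set.Ico 0 1) := by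
      ext x
      simp only [Set.mem_inter_iff, Set.mem_setOf_eq, Set.mem_Ico, Set.mem_preimage, div_eq_mul_inv]
      constructor
      · rintro ⟨⟨hxp, hA⟩, hx0, -⟩
        refine ⟨hA, by positivity, ?_⟩
        rw [← div_eq_mul_inv, div_lt_one h]; exact hxp
      · rintro ⟨hA, h0, h1⟩
        rw [← div_eq_mul_inv, div_lt_one h] at h1
        have hx0 : 0 ≤ x := by
          by_contra hc; push_neg at hc
          have : x * p⁻¹ < 0 := mul_neg_of_neg_of_pos hc (by positivity)
          linarith
        exact ⟨⟨h1, hA⟩, hx0, lt_of_lt_of_le h1 hp1⟩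
    rw [hset, Real.volume_preimage_mul_right (by positivity) _]
    rw [inv_inv, abs_of_pos h]

lemma branchF {p : ℝ} (hp0 : 0 ≤ p) (hp1 : p ≤ 1) (A : Set ℝ) :
    (volume.restrict (Set.Ico (0 : ℝ) 1)) {x | ¬ x < p ∧ (x - p) / (1 - p) ∈ A} =
      ENNReal.ofReal (1 - p) * (volume.restrict (Set.Ico (0 : ℝ) 1)) A := by
  rw [Measure.restrict_apply' measurableSet_Ico, Measure.restrict_apply' measurableSet_Ico]
  rcases eq_or_lt_of_le hp1 with h | h
  · have : {x : ℝ | ¬ x < p ∧ (x - p) / (1 - p) ∈ A} ∩ Set.Ico 0 1 = ∅ := by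
      ext x; simp only [Set.mem_inter_iff, Set.mem_setOf_eq, Set.mem_Ico, Set.mem_empty_iff_false,
        iff_false]
      rintro ⟨⟨hx, -⟩, -, hx1⟩; rw [h] at hx; exact hx hx1
    rw [this, h]; simp
  · have h1p : (0:ℝ) < 1 - p := by linarith
    have hset : {x : ℝ | ¬ x < p ∧ (x - p) / (1 - p) ∈ A} ∩ Set.Ico 0 1 =
        (fun x => x + (-p)) ⁻¹' ((fun x => x * (1 - p)⁻¹) ⁻¹' (A ∩ Set.Ico 0 1)) := by
      ext x
      simp only [Set.mem_inter_iff, Set.mem_setOf_eq, Set.mem_Ico, Set.mem_preimage,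
        div_eq_mul_inv, not_lt]
      constructor
      · rintro ⟨⟨hxp, hA⟩, hx0, hx1⟩
        refine ⟨hA, ?_, ?_⟩
        · have : (0:ℝ) ≤ x - p := by linarith
          positivity
        · rw [← div_eq_mul_inv, div_lt_one h1p]; linarith
      · rintro ⟨hA, h0, h1⟩
        rw [← div_eq_mul_inv, div_lt_one h1p] at h1
        have hxp : p ≤ x := by
          by_contra hc; push_neg at hc
          have : (x + -p) * (1 - p)⁻¹ < 0 := mul_neg_of_neg_of_pos (by linarith) (by positivity)
          linarith
        exact ⟨⟨hxp, hA⟩, by linarith, by linarith⟩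
    rw [hset, measure_preimage_add_right volume (-p) _,
      Real.volume_preimage_mul_right (by positivity) _, inv_inv, abs_of_pos h1p]

lemma cylMeasurable (p : ℝ) (N : ℕ) (c : ℕ → Option Bool) :
    MeasurableSet {x : ℝ | ∀ n < N, ∀ v, c n = some v → bernDigits p x n = v} := by
  have : {x : ℝ | ∀ n < N, ∀ v, c n = some v → bernDigits p x n = v} =
      ⋂ (n : ℕ), ⋂ (_ : n < N), ⋂ (v : Bool), ⋂ (_ : c n = some v),
        (fun x => bernDigits p x n) ⁻¹' {v} := by
    ext x; simp [Set.mem_iInter]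
  rw [this]
  exact MeasurableSet.iInter fun n => MeasurableSet.iInter fun _ => MeasurableSet.iInter fun v =>
    MeasurableSet.iInter fun _ =>
      ((measurable_pi_apply n).comp (measurable_bernDigits p)) (measurableSet_singleton v)

lemma cyl {p : ℝ} (hp0 : 0 ≤ p) (hp1 : p ≤ 1) :
    ∀ (N : ℕ) (c : ℕ → Option Bool),
      (volume.restrict (Set.Ico (0 : ℝ) 1)) {x | ∀ n < N, ∀ v, c n = some v → bernDigits p x n = v}
        = ∏ n ∈ Finset.range N, bw p (c n) := by
  intro N
  induction N with
  | zero =>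
    intro c
    simp only [Nat.not_lt_zero, false_implies, implies_true, Set.setOf_true, Finset.range_zero,
      Finset.prod_empty]
    simp [Real.volume_Ico]
  | succ N ih =>
    intro c
    set A : Set ℝ := {y | ∀ n < N, ∀ v, c (n + 1) = some v → bernDigits p y n = v} with hA
    have hkey : ∀ x : ℝ, (∀ n < N + 1, ∀ v, c n = some v → bernDigits p x n = v) ↔
        ((∀ v, c 0 = some v → bernDigit p x = v) ∧ bernShift p x ∈ A) := by
      intro x
      have hd0 : bernDigits p x 0 = bernDigit p x := rfl
      have hds : ∀ n, bernDigits p x (n + 1) = bernDigits p (bernShift p x) n := by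
        intro n; unfold bernDigits; rw [Function.iterate_succ_apply]
      constructor
      · intro h
        refine ⟨fun v hv => by rw [← hd0]; exact h 0 (Nat.succ_pos N) v hv, ?_⟩
        intro n hn v hv
        rw [← hds]; exact h (n + 1) (Nat.succ_lt_succ hn) v hv
      · rintro ⟨h0, hs⟩ n hn v hv
        cases n with
        | zero => rw [hd0]; exact h0 v hv
        | succ m => rw [hds]; exact hs m (Nat.lt_of_succ_lt_succ hn) v hv
    have hprod : ∏ n ∈ Finset.range (N + 1), bw p (c n) =
        (∏ n ∈ Finset.range N, bw p (c (n + 1))) * bw p (c 0) :=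
      Finset.prod_range_succ' _ _
    have hihA := ih (fun n => c (n + 1))
    have hAmeas : MeasurableSet A := cylMeasurable p N _
    match hc0 : c 0 with
    | none =>
      have hsetU : {x : ℝ | ∀ n < N + 1, ∀ v, c n = some v → bernDigits p x n = v} =
          {x | x < p ∧ x / p ∈ A} ∪ {x | ¬ x < p ∧ (x - p) / (1 - p) ∈ A} := by
        ext x
        rw [Set.mem_setOf_eq, hkey x, hc0]
        simp only [Set.mem_union, Set.mem_setOf_eq, reduceCtorEq, false_implies, implies_true,
          true_and]
        unfold bernShift
        by_cases hx : x < p <;> simp [hx]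
      have hdisj : Disjoint {x : ℝ | x < p ∧ x / p ∈ A} {x | ¬ x < p ∧ (x - p) / (1 - p) ∈ A} := by
        rw [Set.disjoint_left]; rintro x ⟨h1, -⟩ ⟨h2, -⟩; exact h2 h1
      have hm2 : MeasurableSet {x : ℝ | ¬ x < p ∧ (x - p) / (1 - p) ∈ A} := by
        refine MeasurableSet.inter ?_ (((measurable_id.sub_const p).div_const (1 - p)) hAmeas)
        exact (measurableSet_Iio (a := p)).compl
      rw [hsetU, measure_union hdisj hm2, branchT hp0 hp1 A, branchF hp0 hp1 A, hprod, hihA, hc0]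
      show _ = _ * bw p none
      rw [← add_mul, ← ENNReal.ofReal_add hp0 (by linarith)]
      simp [bw, mul_comm]
    | some true =>
      have hsetU : {x : ℝ | ∀ n < N + 1, ∀ v, c n = some v → bernDigits p x n = v} =
          {x | x < p ∧ x / p ∈ A} := by
        ext x
        rw [Set.mem_setOf_eq, hkey x, hc0, Set.mem_setOf_eq]
        have : (∀ v, (some true : Option Bool) = some v → bernDigit p x = v) ↔ x < p := by
          constructor
          · intro h; rw [← bernDigit_eq_true p x]; exact h true rfl
          · intro h v hv; cases hv; rw [bernDigit_eq_true]; exact h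
        rw [this]
        constructor
        · rintro ⟨hx, hs⟩
          refine ⟨hx, ?_⟩; unfold bernShift at hs; rwa [if_pos hx] at hs
        · rintro ⟨hx, hs⟩
          refine ⟨hx, ?_⟩; unfold bernShift; rwa [if_pos hx]
      rw [hsetU, branchT hp0 hp1 A, hprod, hihA, hc0]
      show _ = _ * bw p (some true)
      simp [bw, mul_comm]
    | some false =>
      have hsetU : {x : ℝ | ∀ n < N + 1, ∀ v, c n = some v → bernDigits p x n = v} =
          {x | ¬ x < p ∧ (x - p) / (1 - p) ∈ A} := by
        ext x
        rw [Set.mem_setOf_eq, hkey x, hc0, Set.mem_setOf_eq]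
        have : (∀ v, (some false : Option Bool) = some v → bernDigit p x = v) ↔ ¬ x < p := by
          constructor
          · intro h; rw [← bernDigit_eq_false p x]; exact h false rfl
          · intro h v hv; cases hv; rw [bernDigit_eq_false]; exact h
        rw [this]
        constructor
        · rintro ⟨hx, hs⟩
          refine ⟨hx, ?_⟩; unfold bernShift at hs; rwa [if_neg hx] at hs
        · rintro ⟨hx, hs⟩
          refine ⟨hx, ?_⟩; unfold bernShift; rwa [if_neg hx]
      rw [hsetU, branchF hp0 hp1 A, hprod, hihA, hc0]
      show _ = _ * bw p (some false)
      simp [bw, mul_comm]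

lemma cyl_finset {p : ℝ} (hp0 : 0 ≤ p) (hp1 : p ≤ 1) (F : Finset ℕ) (b : Bool) :
    (volume.restrict (Set.Ico (0 : ℝ) 1)) {x | ∀ n ∈ F, bernDigits p x n = b} =
      (bw p (some b)) ^ F.card := by
  set N := (F.sup id) + 1 with hN
  have hsub : ∀ n ∈ F, n < N := fun n hn => Nat.lt_succ_of_le (Finset.le_sup (f := id) hn)
  have hset : {x : ℝ | ∀ n ∈ F, bernDigits p x n = b} =
      {x | ∀ n < N, ∀ v, (if n ∈ F then some b else none) = some v → bernDigits p x n = v} := by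
    ext x; simp only [Set.mem_setOf_eq]; constructor
    · intro h n _ v hv
      by_cases hnF : n ∈ F
      · rw [if_pos hnF] at hv; cases hv; exact h n hnF
      · rw [if_neg hnF] at hv; cases hv
    · intro h n hn
      exact h n (hsub n hn) b (by rw [if_pos hn])
  rw [hset, cyl hp0 hp1 N _]
  have hcong : ∀ n ∈ Finset.range N,
      bw p (if n ∈ F then some b else none) = if n ∈ F then bw p (some b) else 1 := by
    intro n _; split <;> rfl
  rw [Finset.prod_congr rfl hcong, Finset.prod_ite_mem,
    Finset.inter_eq_right.mpr (fun n hn => Finset.mem_range.mpr (hsub n hn)), Finset.prod_const]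

lemma measurable_reindex (ι : Type*) [Countable ι] :
    Measurable (fun (f : ℕ → Bool) (i : ι) => f ((Countable.exists_injective_nat ι).choose i)) :=
  measurable_pi_lambda _ fun i => measurable_pi_apply _

instance isProbabilityMeasure_restrictIco :
    IsProbabilityMeasure (volume.restrict (Set.Ico (0 : ℝ) 1)) :=
  ⟨by rw [Measure.restrict_apply_univ]; simp [Real.volume_Ico]⟩

instance isProbabilityMeasure_iidBool (ι : Type*) [Countable ι] (p : ℝ) :
    IsProbabilityMeasure (iidBool ι p) := by
  unfold iidBool
  have h1 : IsProbabilityMeasure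
      (Measure.map (bernDigits p) (volume.restrict (Set.Ico (0 : ℝ) 1))) :=
    Measure.isProbabilityMeasure_map (measurable_bernDigits p).aemeasurable
  exact Measure.isProbabilityMeasure_map (measurable_reindex ι).aemeasurable

lemma iidBool_single {ι : Type*} [Countable ι] {p : ℝ} (hp0 : 0 ≤ p) (hp1 : p ≤ 1)
    (i : ι) (b : Bool) : iidBool ι p {f | f i = b} = bw p (some b) := by
  have hms1 : MeasurableSet {f : ι → Bool | f i = b} := by
    have h : {f : ι → Bool | f i = b} = (fun f : ι → Bool => f i) ⁻¹' {b} := rfl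
    rw [h]; exact measurable_pi_apply i (measurableSet_singleton b)
  have hms2 : MeasurableSet
      {h : ℕ → Bool | h ((Countable.exists_injective_nat ι).choose i) = b} := by
    have h : {h : ℕ → Bool | h ((Countable.exists_injective_nat ι).choose i) = b} =
        (fun h : ℕ → Bool => h ((Countable.exists_injective_nat ι).choose i)) ⁻¹' {b} := rfl
    rw [h]; exact measurable_pi_apply _ (measurableSet_singleton b)
  unfold iidBool
  rw [Measure.map_apply (measurable_reindex ι) hms1]
  have hpre : ((fun (f : ℕ → Bool) (i : ι) => f ((Countable.exists_injective_nat ι).choose i))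
      ⁻¹' {f | f i = b}) = {h : ℕ → Bool | h ((Countable.exists_injective_nat ι).choose i) = b} :=
    rfl
  rw [hpre, Measure.map_apply (measurable_bernDigits p) hms2]
  have : (bernDigits p) ⁻¹'
      {h : ℕ → Bool | h ((Countable.exists_injective_nat ι).choose i) = b} =
      {x | ∀ n ∈ ({(Countable.exists_injective_nat ι).choose i} : Finset ℕ),
        bernDigits p x n = b} := by
    ext x; simp [Set.mem_preimage]
  rw [this, cyl_finset hp0 hp1, Finset.card_singleton, pow_one]

lemma iidBool_allFalse {ι : Type*} [Countable ι] {p : ℝ} (hp0 : 0 < p) (hp1 : p ≤ 1)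
    (S : Set ι) (hS : S.Infinite) : iidBool ι p {f | ∀ i ∈ S, f i = false} = 0 := by
  set inj := (Countable.exists_injective_nat ι).choose with hinjdef
  have hinj : Function.Injective inj := (Countable.exists_injective_nat ι).choose_spec
  have hms1 : MeasurableSet {f : ι → Bool | ∀ i ∈ S, f i = false} := by
    have : {f : ι → Bool | ∀ i ∈ S, f i = false} =
        ⋂ (i : ι), ⋂ (_ : i ∈ S), (fun f : ι → Bool => f i) ⁻¹' {false} := by
      ext f; simp
    rw [this]
    exact MeasurableSet.iInter fun i => MeasurableSet.iInter fun _ =>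
      measurable_pi_apply i (measurableSet_singleton false)
  have hms2 : MeasurableSet {h : ℕ → Bool | ∀ i ∈ S, h (inj i) = false} := by
    have : {h : ℕ → Bool | ∀ i ∈ S, h (inj i) = false} =
        ⋂ (i : ι), ⋂ (_ : i ∈ S), (fun h : ℕ → Bool => h (inj i)) ⁻¹' {false} := by
      ext f; simp
    rw [this]
    exact MeasurableSet.iInter fun i => MeasurableSet.iInter fun _ =>
      measurable_pi_apply _ (measurableSet_singleton false)
  unfold iidBool
  rw [Measure.map_apply (measurable_reindex ι) hms1]
  have hpre1 : (fun (f : ℕ → Bool) (i : ι) => f (inj i)) ⁻¹' {f | ∀ i ∈ S, f i = false} =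
      {h : ℕ → Bool | ∀ i ∈ S, h (inj i) = false} := rfl
  rw [hpre1, Measure.map_apply (measurable_bernDigits p) hms2]
  refine le_antisymm ?_ zero_le
  have hT : (inj '' S).Infinite := hS.image hinj.injOn
  have key : ∀ k : ℕ,
      (volume.restrict (Set.Ico (0 : ℝ) 1))
        (bernDigits p ⁻¹' {h | ∀ i ∈ S, h (inj i) = false}) ≤ (ENNReal.ofReal (1 - p)) ^ k := by
    intro k
    obtain ⟨F, hFsub, hFcard⟩ := hT.exists_subset_card_eq k
    have hmono : (bernDigits p ⁻¹' {h | ∀ i ∈ S, h (inj i) = false}) ⊆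
        {x | ∀ n ∈ F, bernDigits p x n = false} := by
      intro x hx n hn
      obtain ⟨i, hiS, rfl⟩ := hFsub hn
      exact hx i hiS
    calc (volume.restrict (Set.Ico (0 : ℝ) 1))
          (bernDigits p ⁻¹' {h | ∀ i ∈ S, h (inj i) = false})
        ≤ (volume.restrict (Set.Ico (0 : ℝ) 1)) {x | ∀ n ∈ F, bernDigits p x n = false} :=
          measure_mono hmono
      _ = (ENNReal.ofReal (1 - p)) ^ k := by
          rw [cyl_finset hp0.le hp1, hFcard]; rfl
  have hlt : ENNReal.ofReal (1 - p) < 1 := by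
    rw [ENNReal.ofReal_lt_one]; linarith
  exact ge_of_tendsto' (ENNReal.tendsto_pow_atTop_nhds_zero_of_lt_one hlt) key

end IidAux

section GeomAux

variable {d : ℕ}

lemma seg_apply_self (u : Site d) (i : Fin d) (a : ℤ) : seg u i a i = a := by
  simp [seg]

lemma seg_apply_ne (u : Site d) {i j : Fin d} (h : j ≠ i) (a : ℤ) : seg u i a j = u j := by
  simp [seg, Function.update_of_ne h]

lemma seg_seg (u : Site d) (i : Fin d) (a c : ℤ) : seg (seg u i a) i c = seg u i c := by
  simp [seg]

/-- Normalized form of a feasible pair covering the edge with base `u`, direction `i`. -/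
def Pnorm (ω : SiteCfg d) (u : Site d) (i : Fin d) (a b : ℤ) : Prop :=
  a ≤ u i ∧ u i < b ∧ ω (seg u i a) = true ∧ ω (seg u i b) = true ∧
    ∀ c : ℤ, a < c → c < b → ω (seg u i c) = false

lemma norm_of {ω : SiteCfg d} {v w : Site d} {e : EdgeIdx d}
    (h1 : FeasiblePair ω v w) (h2 : EdgeOnSeg e v w) :
    ∃ a b, v = seg e.1 e.2 a ∧ w = seg e.1 e.2 b ∧ Pnorm ω e.1 e.2 a b := by
  obtain ⟨a, b, ha, hb, hv, hw⟩ := h2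
  obtain ⟨i, hagree, hlt, hov, how, hgap⟩ := h1
  have hie : i = e.2 := by
    by_contra hne
    have hv' : v i = e.1 i := by rw [hv]; exact seg_apply_ne _ hne _
    have hw' : w i = e.1 i := by rw [hw]; exact seg_apply_ne _ hne _
    rw [hv', hw'] at hlt; exact lt_irrefl _ hlt
  subst hie
  have hvi : v e.2 = a := by rw [hv]; exact seg_apply_self _ _ _
  have hwi : w e.2 = b := by rw [hw]; exact seg_apply_self _ _ _
  refine ⟨a, b, hv, hw, ha, hb, by rw [← hv]; exact hov, by rw [← hw]; exact how, ?_⟩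
  intro c hac hcb
  have := hgap c (by rw [hvi]; exact hac) (by rw [hwi]; exact hcb)
  rwa [hv, seg_seg] at this

lemma norm_unique {ω : SiteCfg d} {u : Site d} {i : Fin d} {a b a' b' : ℤ}
    (h : Pnorm ω u i a b) (h' : Pnorm ω u i a' b') : a = a' ∧ b = b' := by
  obtain ⟨ha, hb, hoa, hob, hgap⟩ := h
  obtain ⟨ha', hb', hoa', hob', hgap'⟩ := h'
  constructor
  · rcases lt_trichotomy a a' with hlt | he | hgt
    · have hf := hgap a' hlt (lt_of_le_of_lt ha' hb); rw [hf] at hoa'; exact absurd hoa' (by simp)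
    · exact he
    · have hf := hgap' a hgt (lt_of_le_of_lt ha hb'); rw [hf] at hoa; exact absurd hoa (by simp)
  · rcases lt_trichotomy b b' with hlt | he | hgt
    · have hf := hgap' b (lt_of_le_of_lt ha' hb) hlt; rw [hf] at hob; exact absurd hob (by simp)
    · exact he
    · have hf := hgap b' (lt_of_le_of_lt ha hb') hgt; rw [hf] at hob'; exact absurd hob' (by simp)

lemma feasible_of_norm {ω : SiteCfg d} {e : EdgeIdx d} {a b : ℤ} (h : Pnorm ω e.1 e.2 a b) :
    FeasiblePair ω (seg e.1 e.2 a) (seg e.1 e.2 b) ∧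
      EdgeOnSeg e (seg e.1 e.2 a) (seg e.1 e.2 b) := by
  obtain ⟨ha, hb, hoa, hob, hgap⟩ := h
  have hab : a < b := lt_of_le_of_lt ha hb
  constructor
  · refine ⟨e.2, fun j hj => ?_, ?_, hoa, hob, ?_⟩
    · rw [seg_apply_ne _ hj, seg_apply_ne _ hj]
    · rw [seg_apply_self, seg_apply_self]; exact hab
    · intro c h1 h2
      rw [seg_apply_self] at h1 h2
      rw [seg_seg]; exact hgap c h1 h2
  · exact ⟨a, b, ha, hb, rfl, rfl⟩

lemma exists_norm {ω : SiteCfg d} {u : Site d} {i : Fin d}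
    (h1 : ∃ c : ℤ, c ≤ u i ∧ ω (seg u i c) = true)
    (h2 : ∃ c : ℤ, u i < c ∧ ω (seg u i c) = true) : ∃ a b, Pnorm ω u i a b := by
  obtain ⟨a, haP, hamax⟩ := Int.exists_greatest_of_bdd
    (P := fun c => c ≤ u i ∧ ω (seg u i c) = true) ⟨u i, fun z hz => hz.1⟩ h1
  obtain ⟨b, hbP, hbmin⟩ := Int.exists_least_of_bdd
    (P := fun c => u i < c ∧ ω (seg u i c) = true) ⟨u i + 1, fun z hz => hz.1⟩ h2
  refine ⟨a, b, haP.1, hbP.1, haP.2, hbP.2, ?_⟩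
  intro c hac hcb
  by_contra hcf
  have hct : ω (seg u i c) = true := by revert hcf; cases ω (seg u i c) <;> simp
  rcases le_or_gt c (u i) with hcu | hcu
  · exact absurd (hamax c ⟨hcu, hct⟩) (not_le.mpr hac)
  · exact absurd (hbmin c ⟨hcu, hct⟩) (not_le.mpr hcb)

lemma measurableSet_eval {ι : Type*} (j : ι) (b : Bool) :
    MeasurableSet {f : ι → Bool | f j = b} := by
  have h : {f : ι → Bool | f j = b} = (fun f : ι → Bool => f j) ⁻¹' {b} := rfl
  rw [h]; exact measurable_pi_apply j (measurableSet_singleton b)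

lemma measurable_feasibleSet (v w : Site d) :
    MeasurableSet {ω : SiteCfg d | FeasiblePair ω v w} := by
  have heq : {ω : SiteCfg d | FeasiblePair ω v w} =
      ⋃ (i : Fin d), ⋃ (_ : (∀ j, j ≠ i → v j = w j) ∧ v i < w i),
        ({ω : SiteCfg d | ω v = true} ∩ {ω : SiteCfg d | ω w = true} ∩
          ⋂ (c : ℤ), ⋂ (_ : v i < c ∧ c < w i), {ω : SiteCfg d | ω (seg v i c) = false}) := by
    ext ω
    simp only [FeasiblePair, Set.mem_setOf_eq, Set.mem_iUnion, Set.mem_inter_iff, Set.mem_iInter]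
    constructor
    · rintro ⟨i, h1, h2, h3, h4, h5⟩
      exact ⟨i, ⟨h1, h2⟩, ⟨h3, h4⟩, fun c hc => h5 c hc.1 hc.2⟩
    · rintro ⟨i, ⟨h1, h2⟩, ⟨h3, h4⟩, h5⟩
      exact ⟨i, h1, h2, h3, h4, fun c hc1 hc2 => h5 c ⟨hc1, hc2⟩⟩
  rw [heq]
  refine MeasurableSet.iUnion fun i => MeasurableSet.iUnion fun _ => ?_
  refine MeasurableSet.inter (MeasurableSet.inter ?_ ?_) ?_
  · exact measurableSet_eval v true
  · exact measurableSet_eval w true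
  · exact MeasurableSet.iInter fun c => MeasurableSet.iInter fun _ =>
      measurableSet_eval (seg v i c) false

end GeomAux


/-- Fix `d ≥ 2`, `p ∈ (0,1]`, `λ ∈ [0,1]`. The marginal probability
that a given nearest-neighbour edge is open equals `λ`. -/
theorem edge_marginal (d : ℕ) (hd : 2 ≤ d) (p lam : ℝ) (hp : p ∈ Set.Ioc (0 : ℝ) 1)
    (hlam : lam ∈ Set.Icc (0 : ℝ) 1) (e : EdgeIdx d) :
    alignMeasure d p lam {ξ | EdgeOpen ξ e} = ENNReal.ofReal lam := by
  obtain ⟨hp0, hp1⟩ := hp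
  obtain ⟨hl0, hl1⟩ := hlam
  have hE : {ξ : Cfg d | EdgeOpen ξ e} = ⋃ vw : Site d × Site d,
      ({ω : SiteCfg d | FeasiblePair ω vw.1 vw.2 ∧ EdgeOnSeg e vw.1 vw.2} ×ˢ
        {η : PairLabels d | η vw = true}) := by
    ext ξ
    simp only [Set.mem_setOf_eq, EdgeOpen, Set.mem_iUnion, Set.mem_prod]
    constructor
    · rintro ⟨v, w, h1, h2, h3⟩; exact ⟨(v, w), ⟨h1, h2⟩, h3⟩
    · rintro ⟨⟨v, w⟩, ⟨h1, h2⟩, h3⟩; exact ⟨v, w, h1, h2, h3⟩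
  have hFmeas : ∀ vw : Site d × Site d,
      MeasurableSet {ω : SiteCfg d | FeasiblePair ω vw.1 vw.2 ∧ EdgeOnSeg e vw.1 vw.2} := by
    intro vw
    by_cases h : EdgeOnSeg e vw.1 vw.2
    · have heq : {ω : SiteCfg d | FeasiblePair ω vw.1 vw.2 ∧ EdgeOnSeg e vw.1 vw.2} =
          {ω : SiteCfg d | FeasiblePair ω vw.1 vw.2} := by ext ω; simp [h]
      rw [heq]; exact measurable_feasibleSet _ _
    · have heq : {ω : SiteCfg d | FeasiblePair ω vw.1 vw.2 ∧ EdgeOnSeg e vw.1 vw.2} = ∅ := by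
        ext ω; simp [h]
      rw [heq]; exact MeasurableSet.empty
  have hGmeas : ∀ vw : Site d × Site d,
      MeasurableSet {η : PairLabels d | η vw = true} := fun vw => measurableSet_eval vw true
  have hFdisj : Pairwise (Function.onFun Disjoint
      (fun vw : Site d × Site d =>
        {ω : SiteCfg d | FeasiblePair ω vw.1 vw.2 ∧ EdgeOnSeg e vw.1 vw.2})) := by
    intro vw vw' hne
    rw [Function.onFun, Set.disjoint_left]
    rintro ω ⟨h1, h2⟩ ⟨h3, h4⟩
    apply hne
    obtain ⟨a, b, hv, hw, hn⟩ := norm_of h1 h2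
    obtain ⟨a', b', hv', hw', hn'⟩ := norm_of h3 h4
    obtain ⟨hae, hbe⟩ := norm_unique hn hn'
    subst hae; subst hbe
    exact Prod.ext (hv.trans hv'.symm) (hw.trans hw'.symm)
  have hdisj : Pairwise (Function.onFun Disjoint
      (fun vw : Site d × Site d =>
        ({ω : SiteCfg d | FeasiblePair ω vw.1 vw.2 ∧ EdgeOnSeg e vw.1 vw.2} ×ˢ
          {η : PairLabels d | η vw = true}))) := by
    intro vw vw' hne
    rw [Function.onFun, Set.disjoint_left]
    rintro ⟨ω, η⟩ ⟨h1, -⟩ ⟨h2, -⟩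
    exact Set.disjoint_left.mp (hFdisj hne) h1 h2
  have hmeasRect : ∀ vw : Site d × Site d,
      MeasurableSet (({ω : SiteCfg d | FeasiblePair ω vw.1 vw.2 ∧ EdgeOnSeg e vw.1 vw.2} ×ˢ
        {η : PairLabels d | η vw = true})) := fun vw => (hFmeas vw).prod (hGmeas vw)
  have hcov : iidBool (Site d) p
      (⋃ vw : Site d × Site d,
        {ω : SiteCfg d | FeasiblePair ω vw.1 vw.2 ∧ EdgeOnSeg e vw.1 vw.2}) = 1 := by
    have hinj : Function.Injective (fun c : ℤ => seg e.1 e.2 c) := by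
      intro c c' h
      simpa [seg_apply_self] using congrFun h e.2
    have hN₁ : iidBool (Site d) p
        {ω : SiteCfg d | ∀ s ∈ (fun c : ℤ => seg e.1 e.2 c) '' Set.Iic (e.1 e.2),
          ω s = false} = 0 :=
      iidBool_allFalse hp0 hp1 _ ((Set.Iic_infinite _).image hinj.injOn)
    have hN₂ : iidBool (Site d) p
        {ω : SiteCfg d | ∀ s ∈ (fun c : ℤ => seg e.1 e.2 c) '' Set.Ioi (e.1 e.2),
          ω s = false} = 0 :=
      iidBool_allFalse hp0 hp1 _ ((Set.Ioi_infinite _).image hinj.injOn)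
    have hsub : (⋃ vw : Site d × Site d,
        {ω : SiteCfg d | FeasiblePair ω vw.1 vw.2 ∧ EdgeOnSeg e vw.1 vw.2})ᶜ ⊆
        {ω : SiteCfg d | ∀ s ∈ (fun c : ℤ => seg e.1 e.2 c) '' Set.Iic (e.1 e.2), ω s = false} ∪
        {ω : SiteCfg d | ∀ s ∈ (fun c : ℤ => seg e.1 e.2 c) '' Set.Ioi (e.1 e.2), ω s = false}
        := by
      intro ω hω
      by_contra hn
      simp only [Set.mem_union] at hn
      push_neg at hn
      obtain ⟨hn1, hn2⟩ := hn
      simp only [Set.mem_setOf_eq, not_forall] at hn1 hn2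
      have h1 : ∃ c : ℤ, c ≤ e.1 e.2 ∧ ω (seg e.1 e.2 c) = true := by
        obtain ⟨s, hs, hval⟩ := hn1
        obtain ⟨c, hc, rfl⟩ := hs
        exact ⟨c, hc, by revert hval; cases ω (seg e.1 e.2 c) <;> simp⟩
      have h2 : ∃ c : ℤ, e.1 e.2 < c ∧ ω (seg e.1 e.2 c) = true := by
        obtain ⟨s, hs, hval⟩ := hn2
        obtain ⟨c, hc, rfl⟩ := hs
        exact ⟨c, hc, by revert hval; cases ω (seg e.1 e.2 c) <;> simp⟩
      obtain ⟨a, b, hnorm⟩ := exists_norm h1 h2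
      obtain ⟨hfeas, honseg⟩ := feasible_of_norm (e := e) hnorm
      exact hω (Set.mem_iUnion.mpr ⟨(seg e.1 e.2 a, seg e.1 e.2 b), hfeas, honseg⟩)
    have hUmeas : MeasurableSet (⋃ vw : Site d × Site d,
        {ω : SiteCfg d | FeasiblePair ω vw.1 vw.2 ∧ EdgeOnSeg e vw.1 vw.2}) :=
      MeasurableSet.iUnion hFmeas
    have hcomp : iidBool (Site d) p ((⋃ vw : Site d × Site d,
        {ω : SiteCfg d | FeasiblePair ω vw.1 vw.2 ∧ EdgeOnSeg e vw.1 vw.2})ᶜ) = 0 := by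
      refine le_antisymm ?_ zero_le
      calc iidBool (Site d) p _ ≤ _ := measure_mono hsub
        _ ≤ _ := measure_union_le _ _
        _ = 0 := by rw [hN₁, hN₂, add_zero]
    have htot := measure_add_measure_compl (μ := iidBool (Site d) p) hUmeas
    rw [hcomp, add_zero] at htot
    rw [htot]; exact measure_univ
  rw [show alignMeasure d p lam = (iidBool (Site d) p).prod (iidBool (Site d × Site d) lam)
    from rfl, hE, measure_iUnion hdisj hmeasRect]
  have hterm : ∀ vw : Site d × Site d,
      ((iidBool (Site d) p).prod (iidBool (Site d × Site d) lam))
        (({ω : SiteCfg d | FeasiblePair ω vw.1 vw.2 ∧ EdgeOnSeg e vw.1 vw.2} ×ˢ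
          {η : PairLabels d | η vw = true})) =
      iidBool (Site d) p {ω : SiteCfg d | FeasiblePair ω vw.1 vw.2 ∧ EdgeOnSeg e vw.1 vw.2} *
        ENNReal.ofReal lam := by
    intro vw
    rw [Measure.prod_prod]
    congr 1
    exact iidBool_single hl0 hl1 vw true
  rw [tsum_congr hterm, ENNReal.tsum_mul_right, ← measure_iUnion hFdisj hFmeas, hcov, one_mul]


end AlignmentPercolation
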